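/- arXiv:2502.10840 — 2 statements merged into one kernel-verified Lean document; each statement's English description precedes it below -/
import Mathlib

section
/- Let N be a positive natural number, m a natural number, a : Fin m → ℂ a family of amplitudes, and ν : Fin m → ℝ a family of frequencies. Define the sampled signal x : ℕ → ℂ by x n = Σ_{j} a j · e^{2πi·(ν j)·n/N} and its discrete Fourier transform X k = (1/√N) · Σ_{n=0}^{N−1} x n · e^{−2πi·k·n/N}. Suppose j₀ ∈ Fin m and k₀ is a natural number with k₀ < N such that ν j₀ = k₀ (the frequency lies exactly on the Fourier grid), and suppose that for every j ≠ j₀ the number (ν j − k₀)/N is not an integer. Then |X k₀ − a j₀ · √N| ≤ Σ_{j ≠ j₀} |a j| · |sin(π(ν j − k₀))| / (√N · |sin(π(ν j − k₀)/N)|). -/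
open Real

lemma abs_exp_two_pi_sub_one (t : ℝ) :
    ‖Complex.exp (2 * π * Complex.I * t) - 1‖ = 2 * |Real.sin (π * t)| := by
  have e1 : ((π * t : ℝ) : ℂ) * Complex.I + ((π * t : ℝ) : ℂ) * Complex.I
      = 2 * π * Complex.I * t := by push_cast; ring
  have e2 : ((π * t : ℝ) : ℂ) * Complex.I + ((-(π * t) : ℝ) : ℂ) * Complex.I = 0 := by
    push_cast; ring
  have h1 : Complex.exp (2 * π * Complex.I * t) - 1
      = Complex.exp (((π * t : ℝ) : ℂ) * Complex.I) *
        (Complex.exp (((π * t : ℝ) : ℂ) * Complex.I) -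
         Complex.exp (((-(π * t) : ℝ) : ℂ) * Complex.I)) := by
    rw [mul_sub, ← Complex.exp_add, ← Complex.exp_add, e1, e2, Complex.exp_zero]
  have h2 : Complex.exp (((π * t : ℝ) : ℂ) * Complex.I) -
      Complex.exp (((-(π * t) : ℝ) : ℂ) * Complex.I)
      = 2 * Complex.sin (π * t) * Complex.I := by
    rw [Complex.exp_mul_I, Complex.exp_mul_I]
    push_cast
    rw [Complex.cos_neg, Complex.sin_neg]
    ring
  rw [h1, h2, norm_mul, Complex.norm_exp_ofReal_mul_I, one_mul, norm_mul, norm_mul,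
    Complex.norm_I, mul_one, Complex.norm_two, ← Complex.ofReal_mul, ← Complex.ofReal_sin,
    Complex.norm_real, Real.norm_eq_abs]

/-- Spectral-leakage bound behind the paper's Theorem 1: if the signal
`x n = Σ_j a j e^{2πi ν_j n/N}` has one frequency `ν j₀ = k₀` exactly on the Fourier
grid and all other frequencies off-grid (`(ν j − k₀)/N` not an integer), then the
DFT value `X k₀` deviates from `a j₀ √N` by at most the aggregate leakage of the
other components. -/
theorem dft_spectral_leakage_bound (N : ℕ) (hN : 0 < N) (m : ℕ)
    (a : Fin m → ℂ) (ν : Fin m → ℝ)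
    (x : ℕ → ℂ)
    (hx : ∀ n : ℕ, x n = ∑ j, a j * Complex.exp (2 * π * Complex.I * ν j * n / N))
    (X : ℕ → ℂ)
    (hX : ∀ k : ℕ, X k = (1 / (Real.sqrt N : ℂ)) * ∑ n ∈ Finset.range N,
        x n * Complex.exp (-(2 * π * Complex.I * k * n / N)))
    (j₀ : Fin m) (k₀ : ℕ) (hk₀ : k₀ < N) (hgrid : ν j₀ = k₀)
    (hoff : ∀ j : Fin m, j ≠ j₀ → ∀ z : ℤ, (ν j - k₀) / N ≠ (z : ℝ)) :
    ‖X k₀ - a j₀ * Real.sqrt N‖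
      ≤ ∑ j ∈ Finset.univ.erase j₀,
          ‖a j‖ * |Real.sin (π * (ν j - k₀))| /
            (Real.sqrt N * |Real.sin (π * (ν j - k₀) / N)|) := by
  have hNC : (N : ℂ) ≠ 0 := Nat.cast_ne_zero.mpr hN.ne'
  have hNR : (0 : ℝ) < Real.sqrt N := Real.sqrt_pos.mpr (by positivity)
  have hsqC : ((Real.sqrt N : ℝ) : ℂ) ≠ 0 := by
    exact_mod_cast hNR.ne'
  -- the per-frequency base point
  set q : Fin m → ℂ := fun j => Complex.exp (2 * π * Complex.I * ((ν j - k₀) / N)) with hqdef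
  -- combine the exponentials
  have hcomb : ∀ (j : Fin m) (n : ℕ),
      Complex.exp (2 * π * Complex.I * ν j * n / N) *
        Complex.exp (-(2 * π * Complex.I * k₀ * n / N)) = q j ^ n := by
    intro j n
    rw [hqdef, ← Complex.exp_nat_mul, ← Complex.exp_add]
    congr 1
    push_cast
    field_simp
    ring
  -- rewrite X k₀
  have hXk : X k₀ = (1 / (Real.sqrt N : ℂ)) * ∑ j, a j * ∑ n ∈ Finset.range N, q j ^ n := by
    rw [hX k₀]
    congr 1
    calc ∑ n ∈ Finset.range N, x n * Complex.exp (-(2 * π * Complex.I * k₀ * n / N))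
        = ∑ n ∈ Finset.range N, ∑ j, a j * q j ^ n := by
          refine Finset.sum_congr rfl fun n _ => ?_
          rw [hx n, Finset.sum_mul]
          refine Finset.sum_congr rfl fun j _ => ?_
          rw [mul_assoc, hcomb]
      _ = ∑ j, ∑ n ∈ Finset.range N, a j * q j ^ n := Finset.sum_comm
      _ = ∑ j, a j * ∑ n ∈ Finset.range N, q j ^ n := by
          simp [Finset.mul_sum]
  -- the on-grid term
  have hq0 : q j₀ = 1 := by
    have h0 : ((ν j₀ : ℝ) : ℂ) - (k₀ : ℂ) = 0 := by
      rw [hgrid]; push_cast; ring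
    rw [hqdef]
    simp [h0]
  have hsum0 : ∑ n ∈ Finset.range N, q j₀ ^ n = (N : ℂ) := by
    simp [hq0]
  have hNs : ((Real.sqrt N : ℝ) : ℂ) * ((Real.sqrt N : ℝ) : ℂ) = (N : ℂ) := by
    rw [← Complex.ofReal_mul, Real.mul_self_sqrt (Nat.cast_nonneg N)]
    push_cast; ring
  have hsplit : X k₀ - a j₀ * Real.sqrt N
      = (1 / (Real.sqrt N : ℂ)) *
        ∑ j ∈ Finset.univ.erase j₀, a j * ∑ n ∈ Finset.range N, q j ^ n := by
    rw [hXk, ← Finset.add_sum_erase Finset.univ _ (Finset.mem_univ j₀), hsum0]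
    field_simp
    linear_combination (-a j₀) * hNs
  -- per-term computation
  have hterm : ∀ j ∈ Finset.univ.erase j₀,
      (1 / Real.sqrt N) * ‖a j * ∑ n ∈ Finset.range N, q j ^ n‖
      = ‖a j‖ * |Real.sin (π * (ν j - k₀))| /
          (Real.sqrt N * |Real.sin (π * (ν j - k₀) / N)|) := by
    intro j hj
    have hjne : j ≠ j₀ := (Finset.mem_erase.mp hj).1
    have hcastq : q j = Complex.exp (2 * π * Complex.I * (((ν j - k₀) / N : ℝ) : ℂ)) := by
      simp only [hqdef]
      congr 1
      push_cast; ring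
    have h2pi : (2 * (π : ℂ) * Complex.I) ≠ 0 := by
      simp [Real.pi_ne_zero, Complex.I_ne_zero, Complex.ofReal_ne_zero]
    have hne1 : q j ≠ 1 := by
      rw [hcastq]
      intro h
      obtain ⟨z, hz⟩ := Complex.exp_eq_one_iff.mp h
      have : ((((ν j - k₀) / N : ℝ)) : ℂ) = (z : ℂ) := by
        apply mul_left_cancel₀ h2pi
        rw [hz]; ring
      exact hoff j hjne z (by exact_mod_cast this)
    have hqN : q j ^ N = Complex.exp (2 * π * Complex.I * (((ν j - k₀) : ℝ) : ℂ)) := by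
      rw [hcastq, ← Complex.exp_nat_mul]
      congr 1
      push_cast
      field_simp
    rw [geom_sum_eq hne1, norm_mul, norm_div, hqN]
    rw [hcastq]
    rw [abs_exp_two_pi_sub_one, abs_exp_two_pi_sub_one]
    have harg : π * ((ν j - k₀) / N) = π * (ν j - k₀) / N := by ring
    rw [harg]
    simp only [div_eq_mul_inv, mul_inv]
    ring
  -- final estimate
  rw [hsplit, norm_mul]
  have habs1 : ‖(1 / (Real.sqrt N : ℂ))‖ = 1 / Real.sqrt N := by
    rw [norm_div, norm_one, Complex.norm_real, Real.norm_eq_abs, abs_of_nonneg (Real.sqrt_nonneg _)]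
  rw [habs1]
  calc (1 / Real.sqrt N) *
        ‖∑ j ∈ Finset.univ.erase j₀, a j * ∑ n ∈ Finset.range N, q j ^ n‖
      ≤ (1 / Real.sqrt N) *
        ∑ j ∈ Finset.univ.erase j₀, ‖a j * ∑ n ∈ Finset.range N, q j ^ n‖ := by
        exact mul_le_mul_of_nonneg_left (norm_sum_le _ _) (by positivity)
    _ = ∑ j ∈ Finset.univ.erase j₀,
        (1 / Real.sqrt N) * ‖a j * ∑ n ∈ Finset.range N, q j ^ n‖ :=
        Finset.mul_sum _ _ _
    _ = _ := Finset.sum_congr rfl hterm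
end

section
/- In the setting of the spectral-leakage bound: let N be a positive natural number, m a natural number, a : Fin m → ℂ, ν : Fin m → ℝ, x n = Σ_{j} a j · e^{2πi·(ν j)·n/N}, and X k = (1/√N) · Σ_{n=0}^{N−1} x n · e^{−2πi·k·n/N}. Suppose j₀ ∈ Fin m and k₀ < N is a natural number with ν j₀ = k₀, that (ν j − k₀)/N is not an integer for every j ≠ j₀, and that the amplitude a j₀ dominates the total leakage: |a j₀| · N > Σ_{j ≠ j₀} |a j| / |sin(π(ν j − k₀)/N)|. Then X k₀ ≠ 0, i.e., the on-grid frequency ν j₀ is observable in the discrete Fourier transform of the signal. -/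
open Real

lemma aux_abs_exp_two_pi_sub_one (θ : ℝ) :
    ‖Complex.exp (2 * π * Complex.I * θ) - 1‖ = 2 * |Real.sin (π * θ)| := by
  have key : Complex.exp (2 * π * Complex.I * θ) - 1
      = Complex.exp (((π * θ : ℝ) : ℂ) * Complex.I) *
        (2 * Complex.sin (((π * θ : ℝ) : ℂ)) * Complex.I) := by
    have h : (2 * π * Complex.I * θ : ℂ) = (2 * ((π * θ : ℝ) : ℂ)) * Complex.I := by
      push_cast; ring
    rw [h, Complex.exp_mul_I, Complex.exp_mul_I, Complex.sin_two_mul, Complex.cos_two_mul]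
    linear_combination (2 : ℂ) * Complex.sin_sq_add_cos_sq (((π * θ : ℝ) : ℂ)) +
      (-2 * Complex.sin (((π * θ : ℝ) : ℂ)) ^ 2) * Complex.I_sq
  rw [key, norm_mul, Complex.norm_exp_ofReal_mul_I, one_mul]
  rw [← Complex.ofReal_sin]
  rw [norm_mul, norm_mul, Complex.norm_real, Real.norm_eq_abs, Complex.norm_I, Complex.norm_two, mul_one]

lemma aux_geom_bound (N : ℕ) (θ : ℝ) (hθ : ∀ z : ℤ, θ ≠ (z : ℝ)) :
    ‖∑ n ∈ Finset.range N, (Complex.exp (2 * π * Complex.I * θ)) ^ n‖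
      ≤ 1 / |Real.sin (π * θ)| := by
  have hsin : Real.sin (π * θ) ≠ 0 := by
    intro h
    rw [Real.sin_eq_zero_iff] at h
    obtain ⟨z, hz⟩ := h
    refine hθ z (mul_left_cancel₀ Real.pi_ne_zero ?_)
    linarith [hz]
  have hw1 : Complex.exp (2 * π * Complex.I * θ) ≠ 1 := by
    intro h
    rw [Complex.exp_eq_one_iff] at h
    obtain ⟨z, hz⟩ := h
    apply hθ z
    have h2 : (2 * π * Complex.I : ℂ) ≠ 0 :=
      mul_ne_zero (mul_ne_zero two_ne_zero (Complex.ofReal_ne_zero.mpr Real.pi_ne_zero))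
        Complex.I_ne_zero
    have : (θ : ℂ) = (z : ℂ) := by
      have h3 : (2 * π * Complex.I : ℂ) * θ = (2 * π * Complex.I) * z := by
        linear_combination hz
      exact mul_left_cancel₀ h2 h3
    exact_mod_cast this
  rw [geom_sum_eq hw1, norm_div]
  have habs1 : ‖Complex.exp (2 * π * Complex.I * θ)‖ = 1 := by
    rw [Complex.norm_exp]
    norm_num [Complex.mul_re, Complex.mul_im]
  have hnum : ‖Complex.exp (2 * π * Complex.I * θ) ^ N - 1‖ ≤ 2 := by
    calc ‖Complex.exp (2 * π * Complex.I * θ) ^ N - 1‖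
        ≤ ‖Complex.exp (2 * π * Complex.I * θ) ^ N‖ + 1 := by
          simpa using norm_sub_le (Complex.exp (2 * π * Complex.I * θ) ^ N) 1
      _ = 2 := by rw [norm_pow, habs1]; norm_num
  rw [aux_abs_exp_two_pi_sub_one]
  rw [div_le_div_iff₀ (by positivity) (by positivity)]
  calc ‖Complex.exp (2 * π * Complex.I * θ) ^ N - 1‖ * |Real.sin (π * θ)|
      ≤ 2 * |Real.sin (π * θ)| := by
        apply mul_le_mul_of_nonneg_right hnum (abs_nonneg _)
    _ = 1 * (2 * |Real.sin (π * θ)|) := by ring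

/-- The paper's Theorem 1 (observability threshold): in the spectral-leakage setting,
if the on-grid amplitude dominates the total leakage,
`|a j₀| N > Σ_{j ≠ j₀} |a j| / |sin(π(ν j − k₀)/N)|`, then `X k₀ ≠ 0`, i.e. the
frequency `ν j₀` is observable in the discrete Fourier transform. -/
theorem dft_on_grid_frequency_observable (N : ℕ) (hN : 0 < N) (m : ℕ)
    (a : Fin m → ℂ) (ν : Fin m → ℝ)
    (x : ℕ → ℂ)
    (hx : ∀ n : ℕ, x n = ∑ j, a j * Complex.exp (2 * π * Complex.I * ν j * n / N))
    (X : ℕ → ℂ)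
    (hX : ∀ k : ℕ, X k = (1 / (Real.sqrt N : ℂ)) * ∑ n ∈ Finset.range N,
        x n * Complex.exp (-(2 * π * Complex.I * k * n / N)))
    (j₀ : Fin m) (k₀ : ℕ) (hk₀ : k₀ < N) (hgrid : ν j₀ = k₀)
    (hoff : ∀ j : Fin m, j ≠ j₀ → ∀ z : ℤ, (ν j - k₀) / N ≠ (z : ℝ))
    (hdom : ‖a j₀‖ * N >
      ∑ j ∈ Finset.univ.erase j₀,
        ‖a j‖ / |Real.sin (π * (ν j - k₀) / N)|) :
    X k₀ ≠ 0 := by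
  have hNR : (N : ℝ) ≠ 0 := Nat.cast_ne_zero.mpr hN.ne'
  have hNC : (N : ℂ) ≠ 0 := Nat.cast_ne_zero.mpr hN.ne'
  -- swap sums
  have hswap : (∑ n ∈ Finset.range N, x n * Complex.exp (-(2 * π * Complex.I * k₀ * n / N)))
      = ∑ j, a j * ∑ n ∈ Finset.range N,
          (Complex.exp (2 * π * Complex.I * (((ν j - k₀) / N : ℝ) : ℂ))) ^ n := by
    simp only [hx, Finset.sum_mul]
    rw [Finset.sum_comm]
    refine Finset.sum_congr rfl fun j _ => ?_
    rw [Finset.mul_sum]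
    refine Finset.sum_congr rfl fun n _ => ?_
    rw [mul_assoc, ← Complex.exp_nat_mul, ← Complex.exp_add]
    congr 1
    push_cast
    field_simp
    ring
  set S := ∑ j, a j * ∑ n ∈ Finset.range N,
      (Complex.exp (2 * π * Complex.I * (((ν j - k₀) / N : ℝ) : ℂ))) ^ n with hS
  have hsplit : S = a j₀ * N + ∑ j ∈ Finset.univ.erase j₀, a j * ∑ n ∈ Finset.range N,
      (Complex.exp (2 * π * Complex.I * (((ν j - k₀) / N : ℝ) : ℂ))) ^ n := by
    rw [hS, ← Finset.add_sum_erase _ _ (Finset.mem_univ j₀)]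
    congr 2
    rw [hgrid]
    simp
  -- bound the tail
  have htail : ‖∑ j ∈ Finset.univ.erase j₀, a j * ∑ n ∈ Finset.range N,
        (Complex.exp (2 * π * Complex.I * (((ν j - k₀) / N : ℝ) : ℂ))) ^ n‖
      ≤ ∑ j ∈ Finset.univ.erase j₀,
        ‖a j‖ / |Real.sin (π * (ν j - k₀) / N)| := by
    refine le_trans (norm_sum_le _ _) (Finset.sum_le_sum fun j hj => ?_)
    rw [norm_mul]
    have hj' : j ≠ j₀ := Finset.ne_of_mem_erase hj
    have hb := aux_geom_bound N ((ν j - k₀) / N) (hoff j hj')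
    have harg : π * ((ν j - k₀) / N) = π * (ν j - k₀) / N := by ring
    rw [harg] at hb
    calc ‖a j‖ * ‖∑ n ∈ Finset.range N,
          (Complex.exp (2 * π * Complex.I * (((ν j - k₀) / N : ℝ) : ℂ))) ^ n‖
        ≤ ‖a j‖ * (1 / |Real.sin (π * (ν j - k₀) / N)|) :=
          mul_le_mul_of_nonneg_left hb (norm_nonneg _)
      _ = ‖a j‖ / |Real.sin (π * (ν j - k₀) / N)| := by ring
  have hSne : S ≠ 0 := by
    intro h0
    rw [hsplit] at h0
    have : a j₀ * N = -(∑ j ∈ Finset.univ.erase j₀, a j * ∑ n ∈ Finset.range N,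
        (Complex.exp (2 * π * Complex.I * (((ν j - k₀) / N : ℝ) : ℂ))) ^ n) := by
      linear_combination h0
    have habs : ‖a j₀‖ * N ≤ ∑ j ∈ Finset.univ.erase j₀,
        ‖a j‖ / |Real.sin (π * (ν j - k₀) / N)| := by
      calc ‖a j₀‖ * N = ‖a j₀ * N‖ := by
            rw [norm_mul]; simp
        _ = ‖-(∑ j ∈ Finset.univ.erase j₀, a j * ∑ n ∈ Finset.range N,
              (Complex.exp (2 * π * Complex.I * (((ν j - k₀) / N : ℝ) : ℂ))) ^ n)‖ := by rw [this]
        _ = _ := norm_neg _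
        _ ≤ _ := htail
    linarith
  rw [hX, hswap]
  apply mul_ne_zero _ hSne
  have hs : (0 : ℝ) < Real.sqrt N := Real.sqrt_pos.mpr (by exact_mod_cast hN)
  simp [Complex.ofReal_eq_zero, hs.ne']
end
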